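/- For every d ≥ 1, the number of minimal permutations with d descents and of size 2d equals the d-th Catalan number C_d = (1/(d+1)) · binom(2d, d). -/

import Mathlib

/-- `σ` has a descent at (0-based) position `i`, i.e. `σ i > σ (i+1)`. -/
def IsDescentAt {n : ℕ} (σ : Equiv.Perm (Fin n)) (i : ℕ) : Prop :=
  ∃ h : i + 1 < n, σ ⟨i + 1, h⟩ < σ ⟨i, Nat.lt_of_succ_lt h⟩

/-- The number of descents of `σ`. -/
noncomputable def descNum {n : ℕ} (σ : Equiv.Perm (Fin n)) : ℕ :=
  {i : ℕ | IsDescentAt σ i}.ncard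

/-- `π` is a pattern of `σ` (written `π ≺ σ`). -/
def IsPattern {k n : ℕ} (π : Equiv.Perm (Fin k)) (σ : Equiv.Perm (Fin n)) : Prop :=
  ∃ f : Fin k ↪o Fin n, ∀ ℓ m : Fin k, π ℓ < π m → σ (f ℓ) < σ (f m)

/-- `σ` is a minimal permutation with `d` descents: it has `d` descents and every
pattern `π ≺ σ` with `π ≠ σ` (equivalently, of strictly smaller size) has fewer
than `d` descents. -/
def MinimalWithDescents (d : ℕ) {n : ℕ} (σ : Equiv.Perm (Fin n)) : Prop :=
  descNum σ = d ∧
    ∀ (k : ℕ) (π : Equiv.Perm (Fin k)), k < n → IsPattern π σ → descNum π < d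

open Finset

section Utility

/-- the descent set is finite -/
lemma descSet_finite {n : ℕ} (σ : Equiv.Perm (Fin n)) : {i : ℕ | IsDescentAt σ i}.Finite := by
  apply Set.Finite.subset (Set.finite_Iio n)
  rintro i ⟨h, -⟩
  exact Set.mem_Iio.mpr (by omega)

/-- trichotomy: each position is a descent or an ascent -/
lemma descent_or_ascent {n : ℕ} (σ : Equiv.Perm (Fin n)) (i : ℕ) (h : i + 1 < n) :
    IsDescentAt σ i ∨ σ ⟨i, by omega⟩ < σ ⟨i + 1, h⟩ := by
  rcases lt_trichotomy (σ ⟨i + 1, h⟩) (σ ⟨i, by omega⟩) with h1 | h1 | h1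
  · exact Or.inl ⟨h, h1⟩
  · exact absurd (σ.injective h1) (by simp [Fin.ext_iff])
  · exact Or.inr h1

/-- lower bound on descNum via an injection -/
lemma le_descNum_of_inj {k m : ℕ} (π : Equiv.Perm (Fin k)) (h : Fin m → ℕ)
    (hinj : Function.Injective h) (hmem : ∀ j, IsDescentAt π (h j)) : m ≤ descNum π := by
  have h1 : ((Finset.univ.image h).card : ℕ) = m := by
    rw [Finset.card_image_of_injective _ hinj, Finset.card_univ, Fintype.card_fin]
  rw [descNum, ← h1, ← Set.ncard_coe_finset]
  apply Set.ncard_le_ncard _ (descSet_finite π)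
  intro x hx
  simp only [Finset.coe_image, Set.mem_image, Finset.mem_coe] at hx
  obtain ⟨j, -, rfl⟩ := hx
  exact hmem j

/-- transfer: descNum of σ ≤ descNum of π via injective renaming of descents -/
lemma descNum_le_of_map {N m : ℕ} (σ : Equiv.Perm (Fin N)) (π : Equiv.Perm (Fin m)) (r : ℕ → ℕ)
    (hr : ∀ i, IsDescentAt σ i → IsDescentAt π (r i))
    (hinj : Set.InjOn r {i | IsDescentAt σ i}) : descNum σ ≤ descNum π :=
  Set.ncard_le_ncard_of_injOn r hr hinj (descSet_finite π)

/-- upper bound: no two adjacent descents -/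
lemma descNum_le_of_nonadj {k : ℕ} (π : Equiv.Perm (Fin k))
    (hna : ∀ i, IsDescentAt π i → ¬ IsDescentAt π (i + 1)) : descNum π ≤ k / 2 := by
  have : descNum π ≤ (↑(Finset.range (k / 2)) : Set ℕ).ncard := by
    apply Set.ncard_le_ncard_of_injOn (· / 2)
    · rintro a ⟨ha, -⟩
      simp only [Finset.coe_range, Set.mem_Iio]
      omega
    · rintro a ⟨ha, ha'⟩ b ⟨hb, hb'⟩ hab
      simp only at hab
      by_contra hne
      rcases Nat.lt_or_ge a b with h | h
      · have : b = a + 1 := by omega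
        exact hna a ⟨ha, ha'⟩ (this ▸ ⟨hb, hb'⟩)
      · have : a = b + 1 := by omega
        exact hna b ⟨hb, hb'⟩ (this ▸ ⟨ha, ha'⟩)
  rwa [Set.ncard_coe_finset, Finset.card_range] at this

end Utility

section Deletion

/-- standardization of an injective map into `Fin n` -/
lemma exists_std {m n : ℕ} (g : Fin m → Fin n) (hg : Function.Injective g) :
    ∃ π : Equiv.Perm (Fin m), ∀ a b, π a < π b ↔ g a < g b := by
  classical
  have hcard : (Finset.image g Finset.univ).card = m := by
    rw [Finset.card_image_of_injective _ hg, Finset.card_univ, Fintype.card_fin]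
  set e := (Finset.image g Finset.univ).orderIsoOfFin hcard with he
  set f : Fin m → Fin m := fun a => e.symm ⟨g a, by simp⟩ with hf
  have key : ∀ a b, f a < f b ↔ g a < g b := by
    intro a b
    rw [hf]
    simp only
    rw [← OrderIso.lt_iff_lt e, OrderIso.apply_symm_apply, OrderIso.apply_symm_apply,
      Subtype.mk_lt_mk]
  have hinj : Function.Injective f := by
    intro a b hab
    apply hg
    have h1 := key a b
    have h2 := key b a
    rw [hab] at h1 h2
    simp only [lt_self_iff_false, false_iff, not_lt] at h1 h2
    exact le_antisymm h2 h1
  refine ⟨Equiv.ofBijective f (Finite.injective_iff_bijective.mp hinj), key⟩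

/-- skip function -/
def skip (t : ℕ) (j : ℕ) : ℕ := if j < t then j else j + 1

/-- delete the entry at position `t` of `σ`, producing a pattern of size one less -/
lemma exists_delete {m N : ℕ} (hN : N = m + 1) (σ : Equiv.Perm (Fin N)) (t : ℕ) :
    ∃ π : Equiv.Perm (Fin m), IsPattern π σ ∧
      ∀ (j : ℕ) (hj : j + 1 < m),
        (IsDescentAt π j ↔
          σ ⟨skip t (j + 1), by unfold skip; split <;> omega⟩ <
          σ ⟨skip t j, by unfold skip; split <;> omega⟩) := by
  have hsm : StrictMono (fun j : Fin m => (⟨skip t j, by unfold skip; split <;> omega⟩ : Fin N)) := by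
    intro a b hab
    simp only [Fin.mk_lt_mk, skip]
    split <;> split <;> omega
  set femb : Fin m ↪o Fin N := OrderEmbedding.ofStrictMono _ hsm with hfemb
  set g : Fin m → Fin N := fun j => σ (femb j) with hg
  have hginj : Function.Injective g := σ.injective.comp femb.injective
  obtain ⟨π, hπ⟩ := exists_std g hginj
  refine ⟨π, ⟨femb, fun ℓ m' hlt => (hπ ℓ m').mp hlt⟩, ?_⟩
  intro j hj
  constructor
  · rintro ⟨h', hlt⟩
    exact (hπ _ _).mp hlt
  · intro hlt
    exact ⟨hj, (hπ ⟨j + 1, hj⟩ ⟨j, by omega⟩).mpr hlt⟩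

end Deletion

section Shape

variable {d : ℕ}

def evenPos (d : ℕ) (i : Fin d) : Fin (2 * d) := ⟨2 * i, by have := i.isLt; omega⟩
def oddPos (d : ℕ) (i : Fin d) : Fin (2 * d) := ⟨2 * i + 1, by have := i.isLt; omega⟩

/-- The shape of minimal permutations of size 2d with d descents. -/
def Shape (d : ℕ) (σ : Equiv.Perm (Fin (2 * d))) : Prop :=
  StrictMono (fun i => σ (evenPos d i)) ∧ StrictMono (fun i => σ (oddPos d i)) ∧
    ∀ i : Fin d, σ (oddPos d i) < σ (evenPos d i)

/-- positions with the same parity give increasing values -/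
lemma Shape.lt_of_parity {σ : Equiv.Perm (Fin (2 * d))} (hσ : Shape d σ)
    (p q : Fin (2 * d)) (hpq : p < q) (hpar : (p : ℕ) % 2 = (q : ℕ) % 2) : σ p < σ q := by
  obtain ⟨hA, hB, hBA⟩ := hσ
  have hp2 : (p : ℕ) / 2 < d := by have := p.isLt; omega
  have hq2 : (q : ℕ) / 2 < d := by have := q.isLt; omega
  have hlt : ((p : ℕ) / 2) < ((q : ℕ) / 2) := by
    have := Fin.lt_iff_val_lt_val.mp hpq; omega
  rcases Nat.even_or_odd (p : ℕ) with he | ho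
  · rcases he with ⟨c, hc⟩
    have hpe : p = evenPos d ⟨(p : ℕ) / 2, hp2⟩ := by
      simp [evenPos, Fin.ext_iff]; omega
    have hqe : q = evenPos d ⟨(q : ℕ) / 2, hq2⟩ := by
      simp [evenPos, Fin.ext_iff]; omega
    rw [hpe, hqe]
    exact hA (by simpa using hlt)
  · have hpe : p = oddPos d ⟨(p : ℕ) / 2, hp2⟩ := by
      simp [oddPos, Fin.ext_iff]; rcases ho with ⟨c, hc⟩; omega
    have hqe : q = oddPos d ⟨(q : ℕ) / 2, hq2⟩ := by
      simp [oddPos, Fin.ext_iff]; rcases ho with ⟨c, hc⟩; omega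
    rw [hpe, hqe]
    exact hB (by simpa using hlt)

/-- a Shape permutation has no decreasing subsequence of length 3 -/
lemma Shape.no321 {σ : Equiv.Perm (Fin (2 * d))} (hσ : Shape d σ)
    (p q r : Fin (2 * d)) (hpq : p < q) (hqr : q < r)
    (h1 : σ q < σ p) (h2 : σ r < σ q) : False := by
  have hpar : (p : ℕ) % 2 = (q : ℕ) % 2 ∨ (p : ℕ) % 2 = (r : ℕ) % 2 ∨
      (q : ℕ) % 2 = (r : ℕ) % 2 := by omega
  rcases hpar with h | h | h
  · exact absurd (hσ.lt_of_parity p q hpq h) (by omega)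
  · exact absurd (hσ.lt_of_parity p r (hpq.trans hqr) h) (by
      have := h1.trans' h2; omega)
  · exact absurd (hσ.lt_of_parity q r hqr h) (by omega)

/-- descents of a Shape permutation are exactly the even positions -/
lemma Shape.descentAt_iff {σ : Equiv.Perm (Fin (2 * d))} (hσ : Shape d σ) (i : ℕ) :
    IsDescentAt σ i ↔ (i % 2 = 0 ∧ i + 1 < 2 * d) := by
  obtain ⟨hA, hB, hBA⟩ := hσ
  constructor
  · rintro ⟨h, hlt⟩
    refine ⟨?_, h⟩
    by_contra ho
    have ho' : i % 2 = 1 := by omega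
    -- i = 2c+1, so σ i = B c < B (c+1) < A (c+1) = σ (i+1)
    have hc : i / 2 < d := by omega
    have hc1 : i / 2 + 1 < d := by omega
    have e1 : (⟨i, by omega⟩ : Fin (2 * d)) = oddPos d ⟨i / 2, hc⟩ := by
      simp [oddPos, Fin.ext_iff]; omega
    have e2 : (⟨i + 1, h⟩ : Fin (2 * d)) = evenPos d ⟨i / 2 + 1, hc1⟩ := by
      simp [evenPos, Fin.ext_iff]; omega
    rw [e1, e2] at hlt
    have g1 : σ (oddPos d ⟨i / 2, hc⟩) < σ (oddPos d ⟨i / 2 + 1, hc1⟩) :=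
      hB (by simp [Fin.lt_iff_val_lt_val])
    have g2 := hBA ⟨i / 2 + 1, hc1⟩
    exact absurd (g1.trans g2) (by omega)
  · rintro ⟨he, hlt⟩
    have hc : i / 2 < d := by omega
    refine ⟨hlt, ?_⟩
    have e1 : (⟨i, by omega⟩ : Fin (2 * d)) = evenPos d ⟨i / 2, hc⟩ := by
      simp [evenPos, Fin.ext_iff]; omega
    have e2 : (⟨i + 1, hlt⟩ : Fin (2 * d)) = oddPos d ⟨i / 2, hc⟩ := by
      simp [oddPos, Fin.ext_iff]; omega
    rw [e1, e2]
    exact hBA ⟨i / 2, hc⟩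

lemma Shape.descNum_eq {σ : Equiv.Perm (Fin (2 * d))} (hσ : Shape d σ) : descNum σ = d := by
  classical
  have hset : {i : ℕ | IsDescentAt σ i} = ↑((Finset.range d).image (fun c => 2 * c)) := by
    ext i
    simp only [Set.mem_setOf_eq, hσ.descentAt_iff, Finset.coe_image, Set.mem_image,
      Finset.mem_coe, Finset.mem_range]
    constructor
    · rintro ⟨he, hlt⟩
      exact ⟨i / 2, by omega, by omega⟩
    · rintro ⟨c, hc, rfl⟩
      omega
  rw [descNum, hset, Set.ncard_coe_finset,
    Finset.card_image_of_injective _ (fun a b h => by omega), Finset.card_range]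

/-- Shape implies minimality -/
lemma Shape.minimal {σ : Equiv.Perm (Fin (2 * d))} (hd : 1 ≤ d) (hσ : Shape d σ) :
    MinimalWithDescents d σ := by
  refine ⟨hσ.descNum_eq, ?_⟩
  intro k π hk ⟨f, hf⟩
  have hna : ∀ i, IsDescentAt π i → ¬ IsDescentAt π (i + 1) := by
    rintro i ⟨h1, hd1⟩ ⟨h2, hd2⟩
    have g1 : σ (f ⟨i + 1, h1⟩) < σ (f ⟨i, by omega⟩) := hf _ _ hd1
    have g2 : σ (f ⟨i + 1 + 1, h2⟩) < σ (f ⟨i + 1, by omega⟩) := hf _ _ hd2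
    have m1 : f ⟨i, by omega⟩ < f ⟨i + 1, h1⟩ := f.strictMono (by simp [Fin.lt_iff_val_lt_val])
    have m2 : f ⟨i + 1, h1⟩ < f ⟨i + 1 + 1, h2⟩ := f.strictMono (by simp [Fin.lt_iff_val_lt_val])
    exact hσ.no321 _ _ _ m1 m2 g1 g2
  have := descNum_le_of_nonadj π hna
  omega

end Shape

section MinimalToShape

variable {d : ℕ}

lemma fin_congr {n : ℕ} (σ : Equiv.Perm (Fin n)) {a b a' b' : ℕ} {ha : a < n} {hb : b < n}
    (ha' : a' < n) (hb' : b' < n) (eqa : a = a') (eqb : b = b')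
    (h : σ ⟨a, ha⟩ < σ ⟨b, hb⟩) : σ ⟨a', ha'⟩ < σ ⟨b', hb'⟩ := by
  subst eqa; subst eqb; exact h

lemma strictMono_of_adj {k : ℕ} {X : Type*} [Preorder X] (f : Fin k → X)
    (h : ∀ i : Fin k, ∀ hi : (i : ℕ) + 1 < k, f i < f ⟨(i : ℕ) + 1, hi⟩) : StrictMono f := by
  intro a b hab
  have key : ∀ m : ℕ, (a : ℕ) + 1 ≤ m → ∀ hm : m < k, f a < f ⟨m, hm⟩ := by
    intro m
    induction m with
    | zero => omega
    | succ p ih =>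
      intro hp hm
      rcases Nat.lt_or_ge (a : ℕ) p with h1 | h1
      · exact (ih (by omega) (by omega)).trans (h ⟨p, by omega⟩ hm)
      · have ha2 : (a : ℕ) + 1 < k := by omega
        have hh := h a ha2
        have e : (⟨(a : ℕ) + 1, ha2⟩ : Fin k) = ⟨p + 1, hm⟩ := Fin.ext (by simp; omega)
        rwa [e] at hh
  have := key (b : ℕ) (by exact hab) b.isLt
  simpa using this

/-- From minimality, derive a contradiction given a deletion position `t` and a
renaming `r` of descents. -/
lemma minimal_contradiction {σ : Equiv.Perm (Fin (2 * d))} (hd : 1 ≤ d)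
    (hm : MinimalWithDescents d σ) (t : ℕ) (r : ℕ → ℕ)
    (hr : ∀ i, IsDescentAt σ i →
      (r i) + 1 < 2 * d - 1 ∧
      skip t (r i + 1) < 2 * d ∧ skip t (r i) < 2 * d ∧
      ∀ (h1 : skip t (r i + 1) < 2 * d) (h2 : skip t (r i) < 2 * d),
        σ ⟨skip t (r i + 1), h1⟩ < σ ⟨skip t (r i), h2⟩)
    (hinj : Set.InjOn r {i | IsDescentAt σ i}) : False := by
  obtain ⟨π, hpat, hiff⟩ := exists_delete (by omega : 2 * d = (2 * d - 1) + 1) σ t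
  have hlt : descNum π < d := hm.2 (2 * d - 1) π (by omega) hpat
  have hge : descNum σ ≤ descNum π := by
    apply descNum_le_of_map σ π r _ hinj
    intro i hi
    obtain ⟨hb, hs1, hs2, hval⟩ := hr i hi
    exact (hiff (r i) hb).mpr (hval _ _)
  have hds := hm.1
  omega

end MinimalToShape

section DescEven

variable {d : ℕ}

lemma minimal_desc_even {σ : Equiv.Perm (Fin (2 * d))} (hd : 1 ≤ d)
    (hm : MinimalWithDescents d σ) (i : ℕ) :
    IsDescentAt σ i ↔ (i % 2 = 0 ∧ i + 1 < 2 * d) := by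
  classical
  -- position 0 is a descent
  have h0 : IsDescentAt σ 0 := by
    rcases descent_or_ascent σ 0 (by omega) with h | h
    · exact h
    · exfalso
      have key0 : ∀ j, IsDescentAt σ j → 1 ≤ j := by
        intro j hj
        rcases Nat.eq_zero_or_pos j with rfl | h1
        · obtain ⟨hb, hlt⟩ := hj
          exact absurd h (not_lt.mpr hlt.le)
        · exact h1
      apply minimal_contradiction hd hm 0 (fun i => i - 1)
      · intro j hj
        have h1j := key0 j hj
        obtain ⟨hb, hlt⟩ := hj
        refine ⟨by omega, by unfold skip; split <;> omega, by unfold skip; split <;> omega, ?_⟩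
        intro h1 h2
        exact fin_congr σ h1 h2 (by unfold skip; split <;> omega)
          (by unfold skip; split <;> omega) hlt
      · intro x hx y hy hxy
        have := key0 x hx; have := key0 y hy
        simp only at hxy
        omega
  -- position 2d - 2 is a descent
  have hlast : IsDescentAt σ (2 * d - 2) := by
    rcases descent_or_ascent σ (2 * d - 2) (by omega) with h | h
    · exact h
    · exfalso
      have keyl : ∀ j, IsDescentAt σ j → j ≠ 2 * d - 2 := by
        intro j hj hje
        subst hje
        obtain ⟨hb, hlt⟩ := hj
        exact absurd h (not_lt.mpr hlt.le)
      apply minimal_contradiction hd hm (2 * d - 1) (fun i => i)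
      · intro j hj
        have h1j := keyl j hj
        obtain ⟨hb, hlt⟩ := hj
        refine ⟨by omega, by unfold skip; split <;> omega, by unfold skip; split <;> omega, ?_⟩
        intro h1 h2
        exact fin_congr σ h1 h2 (by unfold skip; split <;> omega)
          (by unfold skip; split <;> omega) hlt
      · exact fun x _ y _ h => h
  -- no two adjacent ascents
  have hnoadj : ∀ j, j + 2 < 2 * d → ¬ IsDescentAt σ j → IsDescentAt σ (j + 1) := by
    intro j hj2 hnd
    rcases descent_or_ascent σ (j + 1) (by omega) with h | hasc1
    · exact h
    exfalso
    have hasc0 : σ ⟨j, by omega⟩ < σ ⟨j + 1, by omega⟩ := by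
      rcases descent_or_ascent σ j (by omega) with h | h
      · exact absurd h hnd
      · exact h
    have key : ∀ x, IsDescentAt σ x → x < j ∨ j + 2 ≤ x := by
      intro x hx
      rcases Nat.lt_or_ge x j with h1 | h1
      · exact Or.inl h1
      rcases Nat.lt_or_ge x (j + 2) with h2 | h2
      · exfalso
        obtain ⟨hb, hlt⟩ := hx
        have hxc : x = j ∨ x = j + 1 := by omega
        rcases hxc with rfl | rfl
        · exact absurd hasc0 (not_lt.mpr hlt.le)
        · exact absurd hasc1 (not_lt.mpr hlt.le)
      · exact Or.inr h2
    apply minimal_contradiction hd hm (j + 1) (fun i => if i ≤ j then i else i - 1)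
    · intro x hx
      obtain ⟨hb, hlt⟩ := hx
      rcases key x ⟨hb, hlt⟩ with h1 | h1
      · refine ⟨by simp only [if_pos (le_of_lt h1)]; omega, ?_, ?_, ?_⟩
        · simp only [if_pos (le_of_lt h1)]; unfold skip; split <;> omega
        · simp only [if_pos (le_of_lt h1)]; unfold skip; split <;> omega
        · intro h1' h2'
          refine fin_congr σ h1' h2' ?_ ?_ hlt <;>
            · simp only [if_pos (le_of_lt h1)]; unfold skip; split <;> omega
      · refine ⟨by simp only [if_neg (by omega : ¬ x ≤ j)]; omega, ?_, ?_, ?_⟩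
        · simp only [if_neg (by omega : ¬ x ≤ j)]; unfold skip; split <;> omega
        · simp only [if_neg (by omega : ¬ x ≤ j)]; unfold skip; split <;> omega
        · intro h1' h2'
          refine fin_congr σ h1' h2' ?_ ?_ hlt <;>
            · simp only [if_neg (by omega : ¬ x ≤ j)]; unfold skip; split <;> omega
    · intro x hx y hy hxy
      have kx := key x hx; have ky := key y hy
      simp only at hxy
      split_ifs at hxy <;> omega
  -- the finset of ascents
  set ASf : Finset ℕ := (Finset.range (2 * d - 1)).filter (fun i => ¬ IsDescentAt σ i) with hASf
  have hcoe : {i : ℕ | IsDescentAt σ i} =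
      ↑((Finset.range (2 * d - 1)).filter (fun i => IsDescentAt σ i)) := by
    ext x
    simp only [Set.mem_setOf_eq, Finset.coe_filter, Finset.mem_range, Set.mem_setOf_eq]
    exact ⟨fun h => ⟨by obtain ⟨hb, -⟩ := h; omega, h⟩, fun h => h.2⟩
  have hcard : ((Finset.range (2 * d - 1)).filter (fun i => IsDescentAt σ i)).card = d := by
    have h1 := hm.1
    rwa [descNum, hcoe, Set.ncard_coe_finset] at h1
  have hAcard : ASf.card = d - 1 := by
    have hsd : ASf = Finset.range (2 * d - 1) \
        (Finset.range (2 * d - 1)).filter (fun i => IsDescentAt σ i) := by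
      rw [hASf, Finset.filter_not]
    rw [hsd, Finset.card_sdiff_of_subset (Finset.filter_subset _ _), hcard, Finset.card_range]
    omega
  have hA1 : ∀ x ∈ ASf, 1 ≤ x ∧ x ≤ 2 * d - 3 := by
    intro x hx
    rw [hASf, Finset.mem_filter, Finset.mem_range] at hx
    obtain ⟨hxr, hxd⟩ := hx
    constructor
    · rcases Nat.eq_zero_or_pos x with rfl | h1
      · exact absurd h0 hxd
      · exact h1
    · rcases Nat.lt_or_ge x (2 * d - 2) with h1 | h1
      · omega
      · have : x = 2 * d - 2 := by omega
        subst this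
        exact absurd hlast hxd
  have hA2 : ∀ x ∈ ASf, x + 1 ∉ ASf := by
    intro x hx hx1
    rw [hASf, Finset.mem_filter, Finset.mem_range] at hx hx1
    exact hx1.2 (hnoadj x (by omega) hx.2)
  -- surjectivity of (x-1)/2 : ASf → range (d-1)
  have hsurj : ∀ c ∈ Finset.range (d - 1), ∃ x ∈ ASf, (x - 1) / 2 = c := by
    intro c hc
    have hmaps : ∀ x ∈ ASf, (x - 1) / 2 ∈ Finset.range (d - 1) := by
      intro x hx
      obtain ⟨hx1, hx2⟩ := hA1 x hx
      rw [Finset.mem_range]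
      omega
    have hinj : Set.InjOn (fun x => (x - 1) / 2) ↑ASf := by
      intro x hx y hy hxy
      simp only at hxy
      obtain ⟨hx1, -⟩ := hA1 x hx
      obtain ⟨hy1, -⟩ := hA1 y hy
      by_contra hne
      rcases Nat.lt_or_ge x y with h1 | h1
      · have : y = x + 1 := by omega
        exact hA2 x hx (this ▸ hy)
      · have : x = y + 1 := by omega
        exact hA2 y hy (this ▸ hx)
    have := Finset.surj_on_of_inj_on_of_card_le (s := ASf) (t := Finset.range (d - 1))
      (f := fun x _ => (x - 1) / 2) (fun x hx => hmaps x hx)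
      (fun x y hx hy h => hinj hx hy h) (by rw [hAcard, Finset.card_range])
    obtain ⟨x, hx, hxe⟩ := this c hc
    exact ⟨x, hx, hxe.symm⟩
  -- downward induction: all odd slots are ascents
  have claim : ∀ k, k + 1 ≤ d - 1 → 2 * (d - 2 - k) + 1 ∈ ASf := by
    intro k
    induction k with
    | zero =>
      intro hk
      obtain ⟨x, hx, hxe⟩ := hsurj (d - 2) (by rw [Finset.mem_range]; omega)
      obtain ⟨hx1, hx2⟩ := hA1 x hx
      have : x = 2 * (d - 2 - 0) + 1 := by omega
      rwa [← this]
    | succ k ih =>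
      intro hk
      have prev := ih (by omega)
      obtain ⟨x, hx, hxe⟩ := hsurj (d - 3 - k) (by rw [Finset.mem_range]; omega)
      obtain ⟨hx1, hx2⟩ := hA1 x hx
      have hcases : x = 2 * (d - 3 - k) + 1 ∨ x = 2 * (d - 3 - k) + 2 := by omega
      rcases hcases with h1 | h1
      · have : x = 2 * (d - 2 - (k + 1)) + 1 := by omega
        rwa [← this]
      · exfalso
        have hx1' : x + 1 = 2 * (d - 2 - k) + 1 := by omega
        exact hA2 x hx (hx1' ▸ prev)
  have hodd : ∀ c, c < d - 1 → 2 * c + 1 ∈ ASf := by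
    intro c hc
    have := claim (d - 2 - c) (by omega)
    rwa [show d - 2 - (d - 2 - c) = c from by omega] at this
  -- ASf consists exactly of the odd slots
  have hAeq : ASf = (Finset.range (d - 1)).image (fun c => 2 * c + 1) := by
    symm
    apply Finset.eq_of_subset_of_card_le
    · intro x hx
      simp only [Finset.mem_image, Finset.mem_range] at hx
      obtain ⟨c, hc, rfl⟩ := hx
      exact hodd c hc
    · rw [hAcard, Finset.card_image_of_injective _ (fun a b h => by omega), Finset.card_range]
  -- conclude
  constructor
  · rintro ⟨hb, hlt⟩
    refine ⟨?_, hb⟩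
    by_contra hone
    have hone' : i % 2 = 1 := by omega
    have hio : 2 * (i / 2) + 1 ∈ ASf := hodd (i / 2) (by omega)
    rw [show 2 * (i / 2) + 1 = i from by omega, hASf, Finset.mem_filter] at hio
    exact hio.2 ⟨hb, hlt⟩
  · rintro ⟨he, hb⟩
    rcases descent_or_ascent σ i (by omega) with h | h
    · exact h
    · exfalso
      have hia : i ∈ ASf := by
        rw [hASf, Finset.mem_filter, Finset.mem_range]
        refine ⟨by omega, ?_⟩
        rintro ⟨hb', hlt'⟩
        exact absurd h (not_lt.mpr hlt'.le)
      rw [hAeq] at hia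
      simp only [Finset.mem_image, Finset.mem_range] at hia
      obtain ⟨c, -, hce⟩ := hia
      omega

end DescEven

section MinimalShape

variable {d : ℕ}

lemma minimal_shape {σ : Equiv.Perm (Fin (2 * d))} (hd : 1 ≤ d)
    (hm : MinimalWithDescents d σ) : Shape d σ := by
  have hde := minimal_desc_even hd hm
  -- descending pairs
  have goal3 : ∀ c, ∀ hc : c < d, σ ⟨2 * c + 1, by omega⟩ < σ ⟨2 * c, by omega⟩ := by
    intro c hc
    obtain ⟨hb, hlt⟩ := (hde (2 * c)).mpr ⟨by omega, by omega⟩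
    exact fin_congr σ _ _ rfl rfl hlt
  -- adjacent even positions increase
  have goal1 : ∀ c, ∀ hc : c + 1 < d, σ ⟨2 * c, by omega⟩ < σ ⟨2 * c + 2, by omega⟩ := by
    intro c hc
    by_contra hcon
    have hne : σ ⟨2 * c + 2, by omega⟩ ≠ σ ⟨2 * c, by omega⟩ := by
      intro h
      have := σ.injective h
      rw [Fin.mk.injEq] at this
      omega
    have hM4 : σ ⟨2 * c + 2, by omega⟩ < σ ⟨2 * c, by omega⟩ :=
      lt_of_le_of_ne (not_lt.mp hcon) hne
    apply minimal_contradiction hd hm (2 * c + 1) (fun i => if i ≤ 2 * c then i else i - 1)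
    · intro x hx
      have hxe := (hde x).mp hx
      obtain ⟨hb, hlt⟩ := hx
      have hcases : x + 2 ≤ 2 * c ∨ x = 2 * c ∨ 2 * c + 2 ≤ x := by omega
      rcases hcases with h1 | h1 | h1
      · refine ⟨by split <;> omega, by simp only [skip]; split_ifs <;> omega,
          by simp only [skip]; split_ifs <;> omega, ?_⟩
        intro h1' h2'
        exact fin_congr σ h1' h2' (by simp only [skip]; split_ifs <;> omega)
          (by simp only [skip]; split_ifs <;> omega) hlt
      · subst h1
        refine ⟨by split <;> omega, by simp only [skip]; split_ifs <;> omega,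
          by simp only [skip]; split_ifs <;> omega, ?_⟩
        intro h1' h2'
        exact fin_congr σ h1' h2' (by simp only [skip]; split_ifs <;> omega)
          (by simp only [skip]; split_ifs <;> omega) hM4
      · refine ⟨by split <;> omega, by simp only [skip]; split_ifs <;> omega,
          by simp only [skip]; split_ifs <;> omega, ?_⟩
        intro h1' h2'
        exact fin_congr σ h1' h2' (by simp only [skip]; split_ifs <;> omega)
          (by simp only [skip]; split_ifs <;> omega) hlt
    · intro x hx y hy hxy
      have hx2 := (hde x).mp hx
      have hy2 := (hde y).mp hy
      simp only at hxy
      split_ifs at hxy <;> omega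
  -- adjacent odd positions increase
  have goal2 : ∀ c, ∀ hc : c + 1 < d, σ ⟨2 * c + 1, by omega⟩ < σ ⟨2 * c + 3, by omega⟩ := by
    intro c hc
    by_contra hcon
    have hne : σ ⟨2 * c + 3, by omega⟩ ≠ σ ⟨2 * c + 1, by omega⟩ := by
      intro h
      have := σ.injective h
      rw [Fin.mk.injEq] at this
      omega
    have hM5 : σ ⟨2 * c + 3, by omega⟩ < σ ⟨2 * c + 1, by omega⟩ :=
      lt_of_le_of_ne (not_lt.mp hcon) hne
    apply minimal_contradiction hd hm (2 * c + 2) (fun i => if i ≤ 2 * c then i else i - 1)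
    · intro x hx
      have hxe := (hde x).mp hx
      obtain ⟨hb, hlt⟩ := hx
      have hcases : x ≤ 2 * c ∨ x = 2 * c + 2 ∨ 2 * c + 4 ≤ x := by omega
      rcases hcases with h1 | h1 | h1
      · refine ⟨by split <;> omega, by simp only [skip]; split_ifs <;> omega,
          by simp only [skip]; split_ifs <;> omega, ?_⟩
        intro h1' h2'
        exact fin_congr σ h1' h2' (by simp only [skip]; split_ifs <;> omega)
          (by simp only [skip]; split_ifs <;> omega) hlt
      · subst h1
        refine ⟨by split <;> omega, by simp only [skip]; split_ifs <;> omega,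
          by simp only [skip]; split_ifs <;> omega, ?_⟩
        intro h1' h2'
        exact fin_congr σ h1' h2' (by simp only [skip]; split_ifs <;> omega)
          (by simp only [skip]; split_ifs <;> omega) hM5
      · refine ⟨by split <;> omega, by simp only [skip]; split_ifs <;> omega,
          by simp only [skip]; split_ifs <;> omega, ?_⟩
        intro h1' h2'
        exact fin_congr σ h1' h2' (by simp only [skip]; split_ifs <;> omega)
          (by simp only [skip]; split_ifs <;> omega) hlt
    · intro x hx y hy hxy
      have hx2 := (hde x).mp hx
      have hy2 := (hde y).mp hy
      simp only at hxy
      split_ifs at hxy <;> omega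
  refine ⟨?_, ?_, ?_⟩
  · apply strictMono_of_adj
    intro i hi
    show σ ⟨2 * (i : ℕ), by omega⟩ < σ ⟨2 * ((i : ℕ) + 1), by omega⟩
    exact fin_congr σ _ _ rfl (by omega) (goal1 (i : ℕ) hi)
  · apply strictMono_of_adj
    intro i hi
    show σ ⟨2 * (i : ℕ) + 1, by omega⟩ < σ ⟨2 * ((i : ℕ) + 1) + 1, by omega⟩
    exact fin_congr σ _ _ rfl (by omega) (goal2 (i : ℕ) hi)
  · intro i
    exact goal3 (i : ℕ) i.isLt

end MinimalShape

section CountUtil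

open DyckStep

lemma count_take_eq_card_filter {α : Type*} [DecidableEq α] (l : List α) (a : α) :
    ∀ t, t ≤ l.length →
      ((l.take t).count a : ℕ) =
        ((Finset.range t).filter (fun i => l[i]? = some a)).card := by
  intro t
  induction t with
  | zero => intro _; simp
  | succ t ih =>
    intro ht
    have htn : t < l.length := ht
    rw [List.take_succ, List.count_append, ih (by omega),
      List.getElem?_eq_getElem htn]
    simp only [Option.toList_some]
    rw [Finset.range_add_one, Finset.filter_insert]
    by_cases hfa : l[t] = a
    · rw [if_pos (by rw [List.getElem?_eq_getElem htn, hfa]),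
        Finset.card_insert_of_notMem (by simp)]
      simp [hfa]
    · rw [if_neg (by rw [List.getElem?_eq_getElem htn]; simpa using hfa)]
      have : List.count a [l[t]] = 0 := by
        rw [List.count_eq_zero]
        simpa using fun h => hfa h.symm
      simp [this]

lemma card_filter_fin_bridge {n t : ℕ} (f : Fin n → DyckStep) (a : DyckStep) (ht : t ≤ n) :
    ((Finset.range t).filter (fun i => (List.ofFn f)[i]? = some a)).card
      = (Finset.univ.filter (fun v : Fin n => (v : ℕ) < t ∧ f v = a)).card := by
  symm
  apply Finset.card_bij (fun (v : Fin n) _ => (v : ℕ))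
  · intro v hv
    rw [Finset.mem_filter] at hv ⊢
    obtain ⟨-, hv1, hv2⟩ := hv
    refine ⟨Finset.mem_range.mpr hv1, ?_⟩
    rw [List.getElem?_eq_getElem (by simpa using v.isLt), List.getElem_ofFn]
    simp [hv2]
  · intro v _ w _ h
    exact Fin.ext h
  · intro i hi
    rw [Finset.mem_filter, Finset.mem_range] at hi
    obtain ⟨hi1, hi2⟩ := hi
    have hin : i < n := lt_of_lt_of_le hi1 ht
    refine ⟨⟨i, hin⟩, ?_, rfl⟩
    rw [Finset.mem_filter]
    rw [List.getElem?_eq_getElem (by simpa using hin), List.getElem_ofFn] at hi2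
    exact ⟨Finset.mem_univ _, hi1, by simpa using hi2⟩

lemma card_univ_filter_lt {d : ℕ} (i : ℕ) (hi : i ≤ d) :
    ((Finset.univ : Finset (Fin d)).filter (fun j : Fin d => (j : ℕ) < i)).card = i := by
  conv_rhs => rw [← Finset.card_range i]
  apply Finset.card_bij (fun (j : Fin d) _ => (j : ℕ))
  · intro j hj
    rw [Finset.mem_filter] at hj
    exact Finset.mem_range.mpr hj.2
  · intro v _ w _ h
    exact Fin.ext h
  · intro j hj
    rw [Finset.mem_range] at hj
    exact ⟨⟨j, by omega⟩, Finset.mem_filter.mpr ⟨Finset.mem_univ _, hj⟩, rfl⟩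

lemma card_univ_filter_odd {d : ℕ} :
    ((Finset.univ : Finset (Fin (2 * d))).filter (fun u : Fin (2 * d) => (u : ℕ) % 2 = 1)).card = d := by
  have him : (Finset.univ : Finset (Fin (2 * d))).filter (fun u : Fin (2 * d) => (u : ℕ) % 2 = 1)
      = Finset.univ.image (oddPos d) := by
    ext u
    simp only [Finset.mem_filter, Finset.mem_univ, true_and, Finset.mem_image]
    constructor
    · intro h
      exact ⟨⟨(u : ℕ) / 2, by have := u.isLt; omega⟩, Fin.ext (by simp [oddPos]; omega)⟩
    · rintro ⟨i, rfl⟩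
      simp only [oddPos, Fin.val_mk]
      omega
  rw [him, Finset.card_image_of_injective _
    (fun a b h => by simpa [oddPos, Fin.ext_iff] using h),
    Finset.card_univ, Fintype.card_fin]

lemma card_univ_filter_even {d : ℕ} :
    ((Finset.univ : Finset (Fin (2 * d))).filter (fun u : Fin (2 * d) => (u : ℕ) % 2 = 0)).card = d := by
  have him : (Finset.univ : Finset (Fin (2 * d))).filter (fun u : Fin (2 * d) => (u : ℕ) % 2 = 0)
      = Finset.univ.image (evenPos d) := by
    ext u
    simp only [Finset.mem_filter, Finset.mem_univ, true_and, Finset.mem_image]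
    constructor
    · intro h
      exact ⟨⟨(u : ℕ) / 2, by have := u.isLt; omega⟩, Fin.ext (by simp [evenPos]; omega)⟩
    · rintro ⟨i, rfl⟩
      simp only [evenPos, Fin.val_mk]
      omega
  rw [him, Finset.card_image_of_injective _
    (fun a b h => by simpa [evenPos, Fin.ext_iff] using h),
    Finset.card_univ, Fintype.card_fin]

end CountUtil

section ShapeToDyck

open DyckStep

variable {d : ℕ}

def stepFn (d : ℕ) (σ : Equiv.Perm (Fin (2 * d))) (v : Fin (2 * d)) : DyckStep :=
  if ((σ.symm v : Fin (2 * d)) : ℕ) % 2 = 1 then U else D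

lemma stepFn_eq_U_iff {σ : Equiv.Perm (Fin (2 * d))} {v : Fin (2 * d)} :
    stepFn d σ v = U ↔ ((σ.symm v : Fin (2 * d)) : ℕ) % 2 = 1 := by
  unfold stepFn; split <;> simp_all

lemma stepFn_eq_D_iff {σ : Equiv.Perm (Fin (2 * d))} {v : Fin (2 * d)} :
    stepFn d σ v = D ↔ ((σ.symm v : Fin (2 * d)) : ℕ) % 2 = 0 := by
  constructor
  · intro hD
    by_contra hmod
    have hU : stepFn d σ v = U := stepFn_eq_U_iff.mpr (by omega)
    rw [hU] at hD
    simp at hD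
  · intro hmod
    unfold stepFn
    rw [if_neg (by omega)]

lemma shape_prefix_le {σ : Equiv.Perm (Fin (2 * d))} (hσ : Shape d σ) (t : ℕ) :
    (Finset.univ.filter (fun v : Fin (2 * d) => (v : ℕ) < t ∧ stepFn d σ v = D)).card
      ≤ (Finset.univ.filter (fun v : Fin (2 * d) => (v : ℕ) < t ∧ stepFn d σ v = U)).card := by
  classical
  have hrep : ∀ v : Fin (2 * d), ((σ.symm v : Fin (2 * d)) : ℕ) % 2 = 0 →
      v = σ (evenPos d ⟨((σ.symm v : Fin (2 * d)) : ℕ) / 2,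
        by have := (σ.symm v).isLt; omega⟩) := by
    intro v hv
    have h1 : σ.symm v = evenPos d ⟨((σ.symm v : Fin (2 * d)) : ℕ) / 2,
        by have := (σ.symm v).isLt; omega⟩ := by
      apply Fin.ext
      simp only [evenPos, Fin.val_mk]
      omega
    have h2 := congrArg σ h1
    rwa [Equiv.apply_symm_apply] at h2
  apply Finset.card_le_card_of_injOn
    (fun v => σ (oddPos d ⟨((σ.symm v : Fin (2 * d)) : ℕ) / 2,
      by have := (σ.symm v).isLt; omega⟩))
  · intro v hv
    rw [Finset.mem_coe, Finset.mem_filter] at hv ⊢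
    obtain ⟨-, hv1, hv2⟩ := hv
    rw [stepFn_eq_D_iff] at hv2
    refine ⟨Finset.mem_univ _, ?_, ?_⟩
    · have hlt := hσ.2.2 ⟨((σ.symm v : Fin (2 * d)) : ℕ) / 2, by have := (σ.symm v).isLt; omega⟩
      rw [← hrep v hv2] at hlt
      have := Fin.lt_iff_val_lt_val.mp hlt
      dsimp only
      omega
    · rw [stepFn_eq_U_iff, Equiv.symm_apply_apply]
      simp only [oddPos, Fin.val_mk]
      omega
  · intro v hv w hw hvw
    rw [Finset.coe_filter, Set.mem_setOf_eq] at hv hw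
    obtain ⟨-, hv1, hv2⟩ := hv
    obtain ⟨-, hw1, hw2⟩ := hw
    rw [stepFn_eq_D_iff] at hv2 hw2
    simp only at hvw
    have h1 := σ.injective hvw
    have h2 : ((σ.symm v : Fin (2 * d)) : ℕ) / 2 = ((σ.symm w : Fin (2 * d)) : ℕ) / 2 := by
      have := congrArg Fin.val h1
      simpa [oddPos, Fin.ext_iff] using this
    rw [hrep v hv2, hrep w hw2]
    congr 2
    exact Fin.ext (by simp [h2])

lemma shape_count_U (σ : Equiv.Perm (Fin (2 * d))) :
    (Finset.univ.filter (fun v : Fin (2 * d) => stepFn d σ v = U)).card = d := by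
  classical
  have him : Finset.univ.filter (fun v : Fin (2 * d) => stepFn d σ v = U)
      = (Finset.univ.filter (fun u : Fin (2 * d) => (u : ℕ) % 2 = 1)).image σ := by
    ext v
    simp only [Finset.mem_filter, Finset.mem_univ, true_and, Finset.mem_image, stepFn_eq_U_iff]
    constructor
    · intro h
      exact ⟨σ.symm v, h, by simp⟩
    · rintro ⟨u, hu, rfl⟩
      simpa using hu
  rw [him, Finset.card_image_of_injective _ σ.injective, card_univ_filter_odd]

lemma shape_count_D (σ : Equiv.Perm (Fin (2 * d))) :
    (Finset.univ.filter (fun v : Fin (2 * d) => stepFn d σ v = D)).card = d := by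
  classical
  have him : Finset.univ.filter (fun v : Fin (2 * d) => stepFn d σ v = D)
      = (Finset.univ.filter (fun u : Fin (2 * d) => (u : ℕ) % 2 = 0)).image σ := by
    ext v
    simp only [Finset.mem_filter, Finset.mem_univ, true_and, Finset.mem_image, stepFn_eq_D_iff]
    constructor
    · intro h
      exact ⟨σ.symm v, h, by simp⟩
    · rintro ⟨u, hu, rfl⟩
      simpa using hu
  rw [him, Finset.card_image_of_injective _ σ.injective, card_univ_filter_even]

lemma shape_full_count (σ : Equiv.Perm (Fin (2 * d))) (a : DyckStep) :
    (List.ofFn (stepFn d σ)).count a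
      = (Finset.univ.filter (fun v : Fin (2 * d) => stepFn d σ v = a)).card := by
  classical
  have h1 := count_take_eq_card_filter (List.ofFn (stepFn d σ)) a (2 * d) (by simp)
  rw [List.take_of_length_le (by simp)] at h1
  rw [h1, card_filter_fin_bridge _ _ le_rfl]
  congr 1
  apply Finset.filter_congr
  intro v _
  simp [v.isLt]

/-- The Dyck word associated to a Shape permutation. -/
noncomputable def shapeDyck (σ : Equiv.Perm (Fin (2 * d))) (hσ : Shape d σ) : DyckWord where
  toList := List.ofFn (stepFn d σ)
  count_U_eq_count_D := by
    rw [shape_full_count, shape_full_count, shape_count_U, shape_count_D]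
  count_D_le_count_U := by
    intro t
    rcases le_or_gt t (2 * d) with h | h
    · rw [count_take_eq_card_filter _ _ t (by simpa using h),
        count_take_eq_card_filter _ _ t (by simpa using h),
        card_filter_fin_bridge _ _ h, card_filter_fin_bridge _ _ h]
      exact shape_prefix_le hσ t
    · rw [List.take_of_length_le (by simp; omega)]
      rw [shape_full_count, shape_full_count, shape_count_U, shape_count_D]

lemma shapeDyck_semilength (σ : Equiv.Perm (Fin (2 * d))) (hσ : Shape d σ) :
    (shapeDyck σ hσ).semilength = d := by
  rw [DyckWord.semilength]
  show (List.ofFn (stepFn d σ)).count U = d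
  rw [shape_full_count, shape_count_U]

end ShapeToDyck

section Injectivity

open DyckStep

variable {d : ℕ}

lemma card_filter_even_symm (σ : Equiv.Perm (Fin (2 * d))) :
    (Finset.univ.filter (fun v : Fin (2 * d) =>
      ((σ.symm v : Fin (2 * d)) : ℕ) % 2 = 0)).card = d := by
  classical
  have heq : (Finset.univ.filter (fun v : Fin (2 * d) =>
      ((σ.symm v : Fin (2 * d)) : ℕ) % 2 = 0))
      = Finset.univ.filter (fun v : Fin (2 * d) => stepFn d σ v = D) :=
    Finset.filter_congr (fun v _ => stepFn_eq_D_iff.symm)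
  rw [heq, shape_count_D]

lemma shape_even_eq {σ : Equiv.Perm (Fin (2 * d))} (hσ : Shape d σ) (i : Fin d) :
    σ (evenPos d i) = (Finset.univ.filter (fun v : Fin (2 * d) =>
      ((σ.symm v : Fin (2 * d)) : ℕ) % 2 = 0)).orderEmbOfFin (card_filter_even_symm σ) i := by
  classical
  have := Finset.orderEmbOfFin_unique (card_filter_even_symm σ)
    (f := fun i => σ (evenPos d i)) ?_ hσ.1
  · exact congrFun this i
  · intro x
    rw [Finset.mem_filter]
    refine ⟨Finset.mem_univ _, ?_⟩
    rw [Equiv.symm_apply_apply]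
    simp [evenPos]

lemma card_filter_odd_symm (σ : Equiv.Perm (Fin (2 * d))) :
    (Finset.univ.filter (fun v : Fin (2 * d) =>
      ((σ.symm v : Fin (2 * d)) : ℕ) % 2 = 1)).card = d := by
  classical
  have heq : (Finset.univ.filter (fun v : Fin (2 * d) =>
      ((σ.symm v : Fin (2 * d)) : ℕ) % 2 = 1))
      = Finset.univ.filter (fun v : Fin (2 * d) => stepFn d σ v = U) :=
    Finset.filter_congr (fun v _ => stepFn_eq_U_iff.symm)
  rw [heq, shape_count_U]

lemma shape_odd_eq {σ : Equiv.Perm (Fin (2 * d))} (hσ : Shape d σ) (i : Fin d) :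
    σ (oddPos d i) = (Finset.univ.filter (fun v : Fin (2 * d) =>
      ((σ.symm v : Fin (2 * d)) : ℕ) % 2 = 1)).orderEmbOfFin (card_filter_odd_symm σ) i := by
  classical
  have := Finset.orderEmbOfFin_unique (card_filter_odd_symm σ)
    (f := fun i => σ (oddPos d i)) ?_ hσ.2.1
  · exact congrFun this i
  · intro x
    rw [Finset.mem_filter]
    refine ⟨Finset.mem_univ _, ?_⟩
    rw [Equiv.symm_apply_apply]
    simp only [oddPos, Fin.val_mk]
    omega

lemma shape_inj {σ1 σ2 : Equiv.Perm (Fin (2 * d))} (h1 : Shape d σ1) (h2 : Shape d σ2)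
    (h : ∀ v, stepFn d σ1 v = stepFn d σ2 v) : σ1 = σ2 := by
  classical
  have hpar : ∀ v, ((σ1.symm v : Fin (2 * d)) : ℕ) % 2 = ((σ2.symm v : Fin (2 * d)) : ℕ) % 2 := by
    intro v
    rcases Nat.mod_two_eq_zero_or_one ((σ1.symm v : Fin (2 * d)) : ℕ) with hz | ho
    · have := stepFn_eq_D_iff.mpr hz
      rw [h v, stepFn_eq_D_iff] at this
      omega
    · have := stepFn_eq_U_iff.mpr ho
      rw [h v, stepFn_eq_U_iff] at this
      omega
  have hfeq : (Finset.univ.filter (fun v : Fin (2 * d) =>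
      ((σ1.symm v : Fin (2 * d)) : ℕ) % 2 = 0)) = (Finset.univ.filter (fun v : Fin (2 * d) =>
      ((σ2.symm v : Fin (2 * d)) : ℕ) % 2 = 0)) := by
    apply Finset.filter_congr
    intro v _
    rw [hpar v]
  have hfeq' : (Finset.univ.filter (fun v : Fin (2 * d) =>
      ((σ1.symm v : Fin (2 * d)) : ℕ) % 2 = 1)) = (Finset.univ.filter (fun v : Fin (2 * d) =>
      ((σ2.symm v : Fin (2 * d)) : ℕ) % 2 = 1)) := by
    apply Finset.filter_congr
    intro v _
    rw [hpar v]
  apply Equiv.ext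
  intro pos
  rcases Nat.even_or_odd (pos : ℕ) with he | ho
  · have hp2 : (pos : ℕ) / 2 < d := by have := pos.isLt; omega
    have hrep : pos = evenPos d ⟨(pos : ℕ) / 2, hp2⟩ := by
      rcases he with ⟨c, hc⟩
      exact Fin.ext (by simp [evenPos]; omega)
    rw [hrep, shape_even_eq h1, shape_even_eq h2]
    simp_rw [hfeq]
  · have hp2 : (pos : ℕ) / 2 < d := by have := pos.isLt; omega
    have hrep : pos = oddPos d ⟨(pos : ℕ) / 2, hp2⟩ := by
      rcases ho with ⟨c, hc⟩
      exact Fin.ext (by simp [oddPos]; omega)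
    rw [hrep, shape_odd_eq h1, shape_odd_eq h2]
    simp_rw [hfeq']

end Injectivity

section Surjectivity

open DyckStep

variable {d : ℕ}

lemma card_filter_list_bridge {n t : ℕ} (l : List DyckStep) (hl : l.length = n) (a : DyckStep)
    (ht : t ≤ n) :
    ((Finset.range t).filter (fun i => l[i]? = some a)).card
      = (Finset.univ.filter (fun v : Fin n => (v : ℕ) < t ∧ l[(v : ℕ)]? = some a)).card := by
  symm
  apply Finset.card_bij (fun (v : Fin n) _ => (v : ℕ))
  · intro v hv
    rw [Finset.mem_filter] at hv ⊢
    exact ⟨Finset.mem_range.mpr hv.2.1, hv.2.2⟩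
  · intro v _ w _ h
    exact Fin.ext h
  · intro i hi
    rw [Finset.mem_filter, Finset.mem_range] at hi
    exact ⟨⟨i, by omega⟩, Finset.mem_filter.mpr ⟨Finset.mem_univ _, hi.1, hi.2⟩, rfl⟩

lemma shape_surj (hd : 1 ≤ d) (p : DyckWord) (hp : p.semilength = d) :
    ∃ (σ : Equiv.Perm (Fin (2 * d))) (hσ : Shape d σ), shapeDyck σ hσ = p := by
  classical
  have hlen : p.toList.length = 2 * d := by
    rw [← p.two_mul_semilength_eq_length, hp]
  set B : Finset (Fin (2 * d)) :=
    Finset.univ.filter (fun v : Fin (2 * d) => p.toList[(v : ℕ)]? = some U) with hBdef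
  have hmemU : ∀ v : Fin (2 * d), v ∈ B ↔ p.toList[(v : ℕ)]? = some U := by
    intro v
    rw [hBdef, Finset.mem_filter]
    simp
  have hsome : ∀ v : Fin (2 * d), ∃ x : DyckStep, p.toList[(v : ℕ)]? = some x := by
    intro v
    exact ⟨_, List.getElem?_eq_getElem (by rw [hlen]; exact v.isLt)⟩
  have hmemD : ∀ v : Fin (2 * d), v ∈ Bᶜ ↔ p.toList[(v : ℕ)]? = some D := by
    intro v
    rw [Finset.mem_compl, hmemU]
    obtain ⟨x, hx⟩ := hsome v
    rcases x.dichotomy with rfl | rfl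
    · simp [hx]
    · simp [hx]
  -- cardinality of B
  have hBcard : B.card = d := by
    have hcount : p.toList.count U = d := hp
    have h1 := count_take_eq_card_filter p.toList U p.toList.length le_rfl
    rw [List.take_length, hlen] at h1
    rw [card_filter_list_bridge p.toList hlen U le_rfl] at h1
    have h2 : (Finset.univ.filter (fun v : Fin (2 * d) =>
        (v : ℕ) < 2 * d ∧ p.toList[(v : ℕ)]? = some U)) = B := by
      rw [hBdef]
      apply Finset.filter_congr
      intro v _
      simp [v.isLt]
    rw [h2] at h1
    omega
  have hBccard : Bᶜ.card = d := by
    rw [Finset.card_compl, hBcard, Fintype.card_fin]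
    omega
  -- prefix domination
  have hprefix : ∀ t, t ≤ 2 * d →
      (Bᶜ.filter (fun x : Fin (2 * d) => (x : ℕ) < t)).card ≤ (B.filter (fun x : Fin (2 * d) => (x : ℕ) < t)).card := by
    intro t ht
    have hD := count_take_eq_card_filter p.toList D t (by omega)
    have hU := count_take_eq_card_filter p.toList U t (by omega)
    rw [card_filter_list_bridge p.toList hlen D ht] at hD
    rw [card_filter_list_bridge p.toList hlen U ht] at hU
    have hDset : (Finset.univ.filter (fun v : Fin (2 * d) =>
        (v : ℕ) < t ∧ p.toList[(v : ℕ)]? = some D)) = Bᶜ.filter (fun x : Fin (2 * d) => (x : ℕ) < t) := by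
      ext v
      rw [Finset.mem_filter, Finset.mem_filter, hmemD v]
      simp only [Finset.mem_univ, true_and]
      tauto
    have hUset : (Finset.univ.filter (fun v : Fin (2 * d) =>
        (v : ℕ) < t ∧ p.toList[(v : ℕ)]? = some U)) = B.filter (fun x : Fin (2 * d) => (x : ℕ) < t) := by
      ext v
      rw [Finset.mem_filter, Finset.mem_filter, hmemU v]
      simp only [Finset.mem_univ, true_and]
      tauto
    rw [hDset] at hD
    rw [hUset] at hU
    have := p.count_D_le_count_U t
    omega
  -- the permutation
  set aemb := Bᶜ.orderEmbOfFin hBccard with haemb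
  set bemb := B.orderEmbOfFin hBcard with hbemb
  have hamem : ∀ j : Fin d, aemb j ∈ Bᶜ := by
    intro j; rw [haemb]; exact Finset.orderEmbOfFin_mem _ _ _
  have hbmem : ∀ j : Fin d, bemb j ∈ B := by
    intro j; rw [hbemb]; exact Finset.orderEmbOfFin_mem _ _ _
  have hbrange : ∀ v, v ∈ B → ∃ j : Fin d, bemb j = v := by
    intro v hv
    have hvr : v ∈ Set.range bemb := by
      rw [hbemb, Finset.range_orderEmbOfFin]
      exact hv
    exact hvr
  clear_value aemb bemb
  set g : Fin (2 * d) → Fin (2 * d) := fun pos =>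
    if (pos : ℕ) % 2 = 0 then aemb ⟨(pos : ℕ) / 2, by have := pos.isLt; omega⟩
    else bemb ⟨(pos : ℕ) / 2, by have := pos.isLt; omega⟩ with hg
  have hginj : Function.Injective g := by
    intro x y hxy
    rw [hg] at hxy
    simp only at hxy
    by_cases hx : (x : ℕ) % 2 = 0 <;> by_cases hy : (y : ℕ) % 2 = 0
    · rw [if_pos hx, if_pos hy] at hxy
      have := aemb.injective hxy
      rw [Fin.mk.injEq] at this
      exact Fin.ext (by omega)
    · rw [if_pos hx, if_neg hy] at hxy
      exfalso
      have h1 := hamem ⟨(x : ℕ) / 2, by have := x.isLt; omega⟩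
      have h2 := hbmem ⟨(y : ℕ) / 2, by have := y.isLt; omega⟩
      rw [hxy] at h1
      exact (Finset.mem_compl.mp h1) h2
    · rw [if_neg hx, if_pos hy] at hxy
      exfalso
      have h1 := hamem ⟨(y : ℕ) / 2, by have := y.isLt; omega⟩
      have h2 := hbmem ⟨(x : ℕ) / 2, by have := x.isLt; omega⟩
      rw [hxy] at h2
      exact (Finset.mem_compl.mp h1) h2
    · rw [if_neg hx, if_neg hy] at hxy
      have := bemb.injective hxy
      rw [Fin.mk.injEq] at this
      exact Fin.ext (by omega)
  set σ : Equiv.Perm (Fin (2 * d)) :=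
    Equiv.ofBijective g (Finite.injective_iff_bijective.mp hginj) with hσdef
  have hgapp : ∀ pos, σ pos = g pos := fun pos => Equiv.ofBijective_apply _ _ pos
  have hgeven : ∀ i : Fin d, σ (evenPos d i) = aemb i := by
    intro i
    rw [hgapp, hg]
    simp only [evenPos, Fin.val_mk]
    simp only [show 2 * (i : ℕ) % 2 = 0 by omega, ↓reduceIte]
    congr 1
    exact Fin.ext (by simp only [Fin.val_mk]; omega)
  have hgodd : ∀ i : Fin d, σ (oddPos d i) = bemb i := by
    intro i
    rw [hgapp, hg]
    simp only [oddPos, Fin.val_mk]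
    simp only [show ¬ ((2 * (i : ℕ) + 1) % 2 = 0) by omega, ↓reduceIte]
    congr 1
    exact Fin.ext (by simp only [Fin.val_mk]; omega)
  clear_value σ g
  -- the ballot inequality
  have hba : ∀ i : Fin d, bemb i < aemb i := by
    intro i
    have hne : aemb i ≠ bemb i := by
      intro h
      have h1 := hamem i
      have h2 := hbmem i
      rw [h] at h1
      exact (Finset.mem_compl.mp h1) h2
    by_contra hcon
    have hab : aemb i < bemb i := lt_of_le_of_ne (not_lt.mp hcon) hne
    set t : ℕ := (aemb i : ℕ) + 1 with ht
    have htle : t ≤ 2 * d := by have := (aemb i).isLt; omega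
    -- lower bound on Bᶜ side
    have hlow : (i : ℕ) + 1 ≤ (Bᶜ.filter (fun x : Fin (2 * d) => (x : ℕ) < t)).card := by
      rw [← Finset.card_range ((i : ℕ) + 1)]
      apply Finset.card_le_card_of_injOn (fun j => aemb ⟨j % d, Nat.mod_lt _ (by omega)⟩)
      · intro j hj
        rw [Finset.mem_coe, Finset.mem_range] at hj
        have hjd : j < d := by have := i.isLt; omega
        have hjm : j % d = j := Nat.mod_eq_of_lt hjd
        rw [Finset.mem_coe, Finset.mem_filter]
        constructor
        · exact hamem ⟨j % d, Nat.mod_lt _ (by omega)⟩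
        · have hle : aemb ⟨j % d, Nat.mod_lt _ (by omega)⟩ ≤ aemb i := by
            apply aemb.monotone
            rw [Fin.le_iff_val_le_val]
            simp [hjm]
            omega
          have := Fin.le_iff_val_le_val.mp hle
          dsimp only
          omega
      · intro x hx y hy hxy
        simp only at hxy
        rw [Finset.coe_range, Set.mem_Iio] at hx hy
        have hxd : x < d := by have := i.isLt; omega
        have hyd : y < d := by have := i.isLt; omega
        have := aemb.injective hxy
        rw [Fin.mk.injEq, Nat.mod_eq_of_lt hxd, Nat.mod_eq_of_lt hyd] at this
        exact this
    -- upper bound on B side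
    have hup : (B.filter (fun x : Fin (2 * d) => (x : ℕ) < t)).card ≤ (i : ℕ) := by
      have hsub : B.filter (fun x : Fin (2 * d) => (x : ℕ) < t) ⊆
          (Finset.univ.filter (fun j : Fin d => (j : ℕ) < (i : ℕ))).image bemb := by
        intro x hx
        rw [Finset.mem_filter] at hx
        obtain ⟨hxB, hxt⟩ := hx
        obtain ⟨j, hj⟩ := hbrange x hxB
        have hji : j < i := by
          have h1 : bemb j < bemb i := by
            rw [hj]
            calc x ≤ aemb i := by rw [Fin.le_iff_val_le_val]; omega
            _ < bemb i := hab
          exact bemb.lt_iff_lt.mp h1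
        rw [Finset.mem_image]
        exact ⟨j, Finset.mem_filter.mpr ⟨Finset.mem_univ _, Fin.lt_iff_val_lt_val.mp hji⟩, hj⟩
      calc (B.filter (fun x : Fin (2 * d) => (x : ℕ) < t)).card
          ≤ ((Finset.univ.filter (fun j : Fin d => (j : ℕ) < (i : ℕ))).image bemb).card :=
            Finset.card_le_card hsub
        _ ≤ (Finset.univ.filter (fun j : Fin d => (j : ℕ) < (i : ℕ))).card :=
            Finset.card_image_le
        _ = (i : ℕ) := card_univ_filter_lt _ (by have := i.isLt; omega)
    have := hprefix t htle
    omega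
  -- Shape
  have hσshape : Shape d σ := by
    refine ⟨?_, ?_, ?_⟩
    · intro x y hxy
      show σ (evenPos d x) < σ (evenPos d y)
      rw [hgeven, hgeven]
      exact aemb.strictMono hxy
    · intro x y hxy
      show σ (oddPos d x) < σ (oddPos d y)
      rw [hgodd, hgodd]
      exact bemb.strictMono hxy
    · intro i
      rw [hgeven, hgodd]
      exact hba i
  -- mem B iff odd preimage
  have hBiff : ∀ v : Fin (2 * d), ((σ.symm v : Fin (2 * d)) : ℕ) % 2 = 1 ↔ v ∈ B := by
    intro v
    constructor
    · intro hv
      have hrep : v = σ (oddPos d ⟨((σ.symm v : Fin (2 * d)) : ℕ) / 2,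
          by have := (σ.symm v).isLt; omega⟩) := by
        have h1 : σ.symm v = oddPos d ⟨((σ.symm v : Fin (2 * d)) : ℕ) / 2,
            by have := (σ.symm v).isLt; omega⟩ := by
          apply Fin.ext
          simp only [oddPos, Fin.val_mk]
          omega
        have h2 := congrArg σ h1
        rwa [Equiv.apply_symm_apply] at h2
      rw [hrep, hgodd]
      exact hbmem _
    · intro hv
      obtain ⟨j, hj⟩ := hbrange v hv
      have : σ (oddPos d j) = v := by rw [hgodd]; exact hj
      rw [← this, Equiv.symm_apply_apply]
      simp only [oddPos, Fin.val_mk]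
      omega
  -- word equality
  refine ⟨σ, hσshape, ?_⟩
  apply DyckWord.ext
  show List.ofFn (stepFn d σ) = p.toList
  apply List.ext_getElem (by simp [hlen])
  intro i h1 h2
  have hid : i < 2 * d := by simpa using h1
  rw [List.getElem_ofFn]
  have hg2 : p.toList[i]? = some (p.toList[i]) := List.getElem?_eq_getElem h2
  rcases (p.toList[i]).dichotomy with hU' | hD'
  · rw [hU']
    rw [hU'] at hg2
    have hmB : (⟨i, hid⟩ : Fin (2 * d)) ∈ B := (hmemU _).mpr (by simpa using hg2)
    have := (hBiff ⟨i, hid⟩).mpr hmB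
    exact stepFn_eq_U_iff.mpr (by simpa using this)
  · rw [hD']
    rw [hD'] at hg2
    have hmB : (⟨i, hid⟩ : Fin (2 * d)) ∈ Bᶜ := (hmemD _).mpr (by simpa using hg2)
    have hnot : (⟨i, hid⟩ : Fin (2 * d)) ∉ B := Finset.mem_compl.mp hmB
    have : ¬ ((σ.symm ⟨i, hid⟩ : Fin (2 * d)) : ℕ) % 2 = 1 := fun h => hnot ((hBiff _).mp h)
    exact stepFn_eq_D_iff.mpr (by omega)

end Surjectivity


/-- The minimal permutations with `d` descents of size `2d` are counted by the `d`-th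
Catalan number `C_d = (1 / (d + 1)) * binom (2d) d`. -/
theorem card_minimal_of_size_two_mul_eq_catalan (d : ℕ) (hd : 1 ≤ d) :
    {σ : Equiv.Perm (Fin (2 * d)) | MinimalWithDescents d σ}.ncard =
      (2 * d).choose d / (d + 1) := by

  classical
  have hset : {σ : Equiv.Perm (Fin (2 * d)) | MinimalWithDescents d σ}
      = {σ : Equiv.Perm (Fin (2 * d)) | Shape d σ} := by
    ext σ
    exact ⟨fun h => minimal_shape hd h, fun h => Shape.minimal hd h⟩
  rw [hset]
  have hbij : Nat.card {σ : Equiv.Perm (Fin (2 * d)) // Shape d σ}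
      = Nat.card {p : DyckWord // p.semilength = d} := by
    apply Nat.card_eq_of_bijective
      (fun s => ⟨shapeDyck s.1 s.2, shapeDyck_semilength s.1 s.2⟩)
    constructor
    · rintro ⟨σ1, h1⟩ ⟨σ2, h2⟩ h
      rw [Subtype.mk.injEq] at h ⊢
      apply shape_inj h1 h2
      have hli : (shapeDyck σ1 h1).toList = (shapeDyck σ2 h2).toList := by rw [h]
      have hofn : List.ofFn (stepFn d σ1) = List.ofFn (stepFn d σ2) := hli
      intro v
      exact congrFun (List.ofFn_inj.mp hofn) v
    · rintro ⟨p, hp⟩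
      obtain ⟨σ, hσ, he⟩ := shape_surj hd p hp
      exact ⟨⟨σ, hσ⟩, Subtype.ext he⟩
  have h1 : {σ : Equiv.Perm (Fin (2 * d)) | Shape d σ}.ncard
      = Nat.card {σ : Equiv.Perm (Fin (2 * d)) // Shape d σ} := by
    rw [← Nat.card_coe_set_eq]
    rfl
  rw [h1, hbij, Nat.card_eq_fintype_card, DyckWord.card_dyckWord_semilength_eq_catalan,
    catalan_eq_centralBinom_div]
  rfl
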